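/- For integers $n \geq k_n \geq 1$ and $\hat\gamma \in (0,1)$, $\sum_{m=k_n}^{\infty} \frac{\prod_{j=1}^{k_n - 1}(m-j)}{(1+m)_{n-1}} \cdot \frac{\hat\gamma (1-\hat\gamma)_{m-1}}{m!} = \frac{(k_n - 1)! \, (1-\hat\gamma)_{k_n - 1} \, (\hat\gamma)_{n - k_n}}{(n-1)! \, (1+\hat\gamma)_{n-1}}$. -/

import Mathlib

open Finset Filter

private lemma hfac (q : ℕ) : ∀ t : ℕ,
    (Nat.factorial q : ℝ) * ∏ i ∈ Finset.range t, ((q : ℝ) + 1 + i) =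
      (Nat.factorial (q + t) : ℝ)
  | 0 => by simp
  | (t + 1) => by
    rw [Finset.prod_range_succ, ← mul_assoc, hfac q t]
    have : q + (t + 1) = (q + t) + 1 := by omega
    rw [this, Nat.factorial_succ]
    push_cast
    ring

private lemma gnedinGaussAux (a : ℕ) : ∀ (b c : ℝ), 0 < b → (a : ℝ) + b < c →
    HasSum (fun j : ℕ => (∏ i ∈ Finset.range j, ((a : ℝ) + i)) *
        (∏ i ∈ Finset.range j, (b + i)) /
        ((∏ i ∈ Finset.range j, (c + i)) * (Nat.factorial j : ℝ)))
      (∏ i ∈ Finset.range a, ((c - 1 - i) / (c - 1 - i - b))) := by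
  induction a with
  | zero =>
    intro b c hb hc
    simp only [Nat.cast_zero, Finset.range_zero, Finset.prod_empty]
    have h0 : ∀ j : ℕ, j ≠ 0 →
        (∏ i ∈ Finset.range j, ((0 : ℝ) + i)) * (∏ i ∈ Finset.range j, (b + i)) /
          ((∏ i ∈ Finset.range j, (c + i)) * (Nat.factorial j : ℝ)) = 0 := by
      intro j hj
      have : (∏ i ∈ Finset.range j, ((0 : ℝ) + i)) = 0 :=
        Finset.prod_eq_zero (Finset.mem_range.mpr (Nat.pos_of_ne_zero hj)) (by norm_num)
      rw [this, zero_mul, zero_div]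
    have h := hasSum_single (f := fun j : ℕ =>
        (∏ i ∈ Finset.range j, ((0 : ℝ) + i)) * (∏ i ∈ Finset.range j, (b + i)) /
          ((∏ i ∈ Finset.range j, (c + i)) * (Nat.factorial j : ℝ))) 0 (fun j hj => h0 j hj)
    simpa using h
  | succ a ih =>
    intro b c hb hc
    push_cast at hc
    have ha0 : (0 : ℝ) ≤ (a : ℝ) := Nat.cast_nonneg a
    have hb' : (a : ℝ) + b < c := by linarith
    have hc1 : (1 : ℝ) < c := by linarith
    have hc0 : (0 : ℝ) < c := by linarith
    set T : ℕ → ℝ := fun j => (∏ i ∈ Finset.range j, ((a : ℝ) + 1 + i)) *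
        (∏ i ∈ Finset.range j, (b + i)) /
        ((∏ i ∈ Finset.range j, (c + i)) * (Nat.factorial j : ℝ)) with hT
    set S : ℕ → ℝ := fun j => (∏ i ∈ Finset.range j, ((a : ℝ) + i)) *
        (∏ i ∈ Finset.range j, (b + i)) /
        ((∏ i ∈ Finset.range j, (c + i)) * (Nat.factorial j : ℝ)) with hSdef
    set G : ℕ → ℝ := fun j => ((j : ℝ) * (c - 1 + j) / ((a : ℝ) + j)) * T j with hG
    have hPcpos : ∀ j : ℕ, (0 : ℝ) < ∏ i ∈ Finset.range j, (c + i) := fun j =>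
      Finset.prod_pos fun i _ => add_pos_of_pos_of_nonneg hc0 (Nat.cast_nonneg i)
    have hfacpos : ∀ j : ℕ, (0 : ℝ) < (Nat.factorial j : ℝ) := fun j => by
      exact_mod_cast Nat.cast_pos.mpr (Nat.factorial_pos j)
    have hPapos : ∀ j : ℕ, (0 : ℝ) < ∏ i ∈ Finset.range j, ((a : ℝ) + 1 + i) := fun j =>
      Finset.prod_pos fun i _ => by positivity
    have hPbpos : ∀ j : ℕ, (0 : ℝ) < ∏ i ∈ Finset.range j, (b + i) := fun j =>
      Finset.prod_pos fun i _ => add_pos_of_pos_of_nonneg hb (Nat.cast_nonneg i)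
    have hTpos : ∀ j, 0 < T j := by
      intro j
      rw [hT]
      exact div_pos (mul_pos (hPapos j) (hPbpos j)) (mul_pos (hPcpos j) (hfacpos j))
    have hSnn : ∀ j, 0 ≤ S j := by
      intro j
      rw [hSdef]
      apply div_nonneg _ (mul_pos (hPcpos j) (hfacpos j)).le
      exact mul_nonneg (Finset.prod_nonneg fun i _ => by positivity) (hPbpos j).le
    -- the per-index telescoping identity
    have key : ∀ j : ℕ,
        (c - ((a : ℝ) + 1) - b) * T j - (c - ((a : ℝ) + 1)) * S j = G j - G (j + 1) := by
      intro j
      have hQa : (∏ i ∈ Finset.range j, ((a : ℝ) + i)) * ((a : ℝ) + j) =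
          (a : ℝ) * ∏ i ∈ Finset.range j, ((a : ℝ) + 1 + i) := by
        calc (∏ i ∈ Finset.range j, ((a : ℝ) + i)) * ((a : ℝ) + j)
            = ∏ i ∈ Finset.range (j + 1), ((a : ℝ) + i) := by
              rw [Finset.prod_range_succ]
          _ = (∏ i ∈ Finset.range j, ((a : ℝ) + ((i + 1 : ℕ) : ℝ))) * ((a : ℝ) + ((0 : ℕ) : ℝ)) :=
              Finset.prod_range_succ' _ j
          _ = (a : ℝ) * ∏ i ∈ Finset.range j, ((a : ℝ) + 1 + i) := by
              rw [mul_comm]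
              congr 1
              · push_cast; ring
              · exact Finset.prod_congr rfl fun i _ => by push_cast; ring
      have hG1 : G (j + 1) = (b + (j : ℝ)) * T j := by
        rw [hG, hT]
        simp only
        rw [Finset.prod_range_succ, Finset.prod_range_succ, Finset.prod_range_succ,
          Nat.factorial_succ]
        have h1 : ((a : ℝ) + 1 + j) ≠ 0 := by positivity
        have h2 : (c + (j : ℝ)) ≠ 0 := by positivity
        have h3 : (∏ i ∈ Finset.range j, (c + i)) ≠ 0 := (hPcpos j).ne'
        have h4 : (Nat.factorial j : ℝ) ≠ 0 := (hfacpos j).ne'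
        have h5 : ((j : ℝ) + 1) ≠ 0 := by positivity
        push_cast
        field_simp
        ring
      rcases Nat.eq_zero_or_pos j with rfl | hj
      · have hT0 : T 0 = 1 := by rw [hT]; simp
        have hT1 : T 1 = ((a : ℝ) + 1) * b / c := by
          rw [hT]; simp [Finset.prod_range_one]
        have hG0 : G 0 = 0 := by rw [hG]; simp
        have hS0 : S 0 = 1 := by rw [hSdef]; simp
        have hG1' : G 1 = b := by simpa [hT0] using hG1
        rw [hG0, hG1', hT0, hS0]
        ring
      · have haj : (0 : ℝ) < (a : ℝ) + j := by
          have : (1 : ℝ) ≤ (j : ℝ) := by exact_mod_cast hj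
          linarith
        have hS_eq : ((a : ℝ) + j) * S j = (a : ℝ) * T j := by
          rw [hSdef, hT]
          simp only
          rw [mul_div_assoc', mul_div_assoc']
          congr 1
          rw [← mul_assoc, mul_comm ((a : ℝ) + j) _, ← mul_assoc]
          rw [mul_assoc, mul_comm _ ((a:ℝ) + (j:ℝ)), ← mul_assoc] at *
          nlinarith [hQa, hPbpos j]
        rw [hG1, hG]
        simp only
        have h6 : S j = (a : ℝ) * T j / ((a : ℝ) + j) := by
          field_simp at hS_eq ⊢
          linarith [hS_eq]
        rw [h6]
        field_simp
        ring
    -- summed telescoping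
    have hG0 : G 0 = 0 := by rw [hG]; simp
    have sum_key : ∀ N : ℕ,
        (c - ((a : ℝ) + 1) - b) * (∑ j ∈ Finset.range N, T j) -
          (c - ((a : ℝ) + 1)) * (∑ j ∈ Finset.range N, S j) = - G N := by
      intro N
      calc (c - ((a : ℝ) + 1) - b) * (∑ j ∈ Finset.range N, T j) -
            (c - ((a : ℝ) + 1)) * (∑ j ∈ Finset.range N, S j)
          = ∑ j ∈ Finset.range N,
              ((c - ((a : ℝ) + 1) - b) * T j - (c - ((a : ℝ) + 1)) * S j) := by
            rw [Finset.mul_sum, Finset.mul_sum, ← Finset.sum_sub_distrib]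
        _ = ∑ j ∈ Finset.range N, (G j - G (j + 1)) :=
            Finset.sum_congr rfl fun j _ => key j
        _ = G 0 - G N := Finset.sum_range_sub' G N
        _ = - G N := by rw [hG0]; ring
    have hGnn : ∀ N, 0 ≤ G N := by
      intro N
      rw [hG]
      apply mul_nonneg _ (hTpos N).le
      apply div_nonneg _ (by positivity)
      apply mul_nonneg (Nat.cast_nonneg N)
      have : (0 : ℝ) ≤ (N : ℝ) := Nat.cast_nonneg N
      linarith
    have hβ : (0 : ℝ) < c - ((a : ℝ) + 1) - b := by linarith
    have hδ : (0 : ℝ) < c - ((a : ℝ) + 1) := by linarith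
    set Va := ∏ i ∈ Finset.range a, ((c - 1 - i) / (c - 1 - i - b)) with hVa
    have hSsum : HasSum S Va := ih b c hb hb'
    have hSle : ∀ N, ∑ j ∈ Finset.range N, S j ≤ Va := fun N =>
      sum_le_hasSum _ (fun i _ => hSnn i) hSsum
    have hbound : ∀ N, ∑ j ∈ Finset.range N, T j ≤
        (c - ((a : ℝ) + 1)) * Va / (c - ((a : ℝ) + 1) - b) := by
      intro N
      rw [le_div_iff₀ hβ]
      have h1 := sum_key N
      have h2 := hGnn N
      have h3 := mul_le_mul_of_nonneg_left (hSle N) hδ.le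
      nlinarith [h1, h2, h3]
    have hTsummable : Summable T :=
      summable_of_sum_range_le (fun n => (hTpos n).le) hbound
    obtain ⟨T0, hT0sum⟩ := hTsummable
    have htt := hT0sum.tendsto_sum_nat
    have hst := hSsum.tendsto_sum_nat
    have hGfun : G = fun N => (c - ((a : ℝ) + 1)) * (∑ j ∈ Finset.range N, S j) -
        (c - ((a : ℝ) + 1) - b) * (∑ j ∈ Finset.range N, T j) := by
      funext N
      have := sum_key N
      linarith
    have hGtend : Tendsto G atTop
        (nhds ((c - ((a : ℝ) + 1)) * Va - (c - ((a : ℝ) + 1) - b) * T0)) := by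
      rw [hGfun]
      exact (hst.const_mul _).sub (htt.const_mul _)
    set L := (c - ((a : ℝ) + 1)) * Va - (c - ((a : ℝ) + 1) - b) * T0 with hL
    have hLnn : 0 ≤ L := ge_of_tendsto' hGtend hGnn
    have hLzero : L = 0 := by
      by_contra hne
      have hLpos : 0 < L := lt_of_le_of_ne hLnn (Ne.symm hne)
      have hev : ∀ᶠ N in atTop, L / 2 ≤ G N :=
        hGtend.eventually (eventually_ge_nhds (by linarith))
      obtain ⟨N₀, hN₀⟩ := eventually_atTop.mp hev
      set M := max N₀ 1 with hM
      have hbound2 : ∀ p : ℕ, L / (2 * c) * (1 / ((p + M : ℕ) : ℝ)) ≤ T (p + M) := by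
        intro p
        set N := p + M with hN
        have hN1 : 1 ≤ N := le_trans (le_max_right N₀ 1) (Nat.le_add_left M p)
        have hNN₀ : N₀ ≤ N := le_trans (le_max_left N₀ 1) (Nat.le_add_left M p)
        have hNr : (1 : ℝ) ≤ (N : ℝ) := by exact_mod_cast hN1
        have hNpos : (0 : ℝ) < (N : ℝ) := by linarith
        have hGN : L / 2 ≤ G N := hN₀ N hNN₀
        have hGval : G N = ((N : ℝ) * (c - 1 + N) / ((a : ℝ) + N)) * T N := by rw [hG]
        have haN : (0 : ℝ) < (a : ℝ) + N := by linarith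
        have hq : (N : ℝ) * (c - 1 + N) / ((a : ℝ) + N) ≤ c * N := by
          rw [div_le_iff₀ haN]
          nlinarith [mul_nonneg (mul_nonneg hNpos.le hc0.le) ha0,
            mul_nonneg (mul_nonneg hNpos.le (by linarith : (0:ℝ) ≤ c - 1))
              (by linarith : (0:ℝ) ≤ (N:ℝ) - 1)]
        have h5 : L / 2 ≤ c * N * T N := by
          calc L / 2 ≤ G N := hGN
            _ = ((N : ℝ) * (c - 1 + N) / ((a : ℝ) + N)) * T N := hGval
            _ ≤ c * N * T N := mul_le_mul_of_nonneg_right hq (hTpos N).le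
        rw [mul_one_div, div_div, div_le_iff₀ (by positivity)]
        calc L = 2 * (L / 2) := by ring
          _ ≤ 2 * (c * N * T N) := by linarith
          _ = T N * (2 * c * N) := by ring
      have hsum2 : Summable (fun p : ℕ => L / (2 * c) * (1 / ((p + M : ℕ) : ℝ))) := by
        apply Summable.of_nonneg_of_le (fun p => by positivity) hbound2
        exact (summable_nat_add_iff M).mpr ⟨T0, hT0sum⟩
      have hsum3 : Summable (fun p : ℕ => (1 / ((p + M : ℕ) : ℝ))) := by
        have h6 := hsum2.mul_left ((2 * c) / L)
        apply h6.congr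
        intro p
        have hcne : c ≠ 0 := hc0.ne'
        have hLne : L ≠ 0 := hLpos.ne'
        field_simp
      have hsum4 : Summable (fun n : ℕ => 1 / ((n : ℝ))) :=
        (summable_nat_add_iff M).mp hsum3
      exact Real.not_summable_one_div_natCast hsum4
    have hT0val : T0 = (c - ((a : ℝ) + 1)) * Va / (c - ((a : ℝ) + 1) - b) := by
      rw [eq_div_iff hβ.ne']
      rw [hL] at hLzero
      linarith
    -- assemble
    have hfun : (fun j : ℕ => (∏ i ∈ Finset.range j, (((a + 1 : ℕ) : ℝ) + i)) *
        (∏ i ∈ Finset.range j, (b + i)) /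
        ((∏ i ∈ Finset.range j, (c + i)) * (Nat.factorial j : ℝ))) = T := by
      funext j
      rw [hT]
      simp only
      congr 1
      congr 1
      exact Finset.prod_congr rfl fun i _ => by push_cast; ring
    rw [hfun, Finset.prod_range_succ, ← hVa]
    have hval : Va * ((c - 1 - (a : ℝ)) / (c - 1 - (a : ℝ) - b)) = T0 := by
      rw [hT0val, mul_div_assoc']
      congr 1
      · ring
      · ring
    rw [← hval] at hT0sum
    exact hT0sum

theorem gnedin_conditional_normalization
    (n k : ℕ) (hk : 1 ≤ k) (hkn : k ≤ n) (γ : ℝ) (hγ0 : 0 < γ) (hγ1 : γ < 1) :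
    HasSum
      (fun t : ℕ =>
        (∏ j ∈ Finset.Icc 1 (k - 1), ((k + t : ℝ) - j)) /
            (∏ r ∈ Finset.range (n - 1), (1 + (k + t : ℝ) + r)) *
          (γ * ∏ i ∈ Finset.range (k + t - 1), (1 - γ + i)) /
            (Nat.factorial (k + t) : ℝ))
      ((Nat.factorial (k - 1) : ℝ) * (∏ i ∈ Finset.range (k - 1), (1 - γ + i)) *
          (∏ i ∈ Finset.range (n - k), (γ + i)) /
        ((Nat.factorial (n - 1) : ℝ) * ∏ i ∈ Finset.range (n - 1), (1 + γ + i))) := by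
  have hk1 : (1 : ℝ) ≤ (k : ℝ) := by exact_mod_cast hk
  have hkn' : (k : ℝ) ≤ (n : ℝ) := by exact_mod_cast hkn
  have hb : (0 : ℝ) < (k : ℝ) - γ := by linarith
  have hc : (k : ℝ) + ((k : ℝ) - γ) < (k : ℝ) + (n : ℝ) := by linarith
  have hfpos : ∀ m : ℕ, (0 : ℝ) < (Nat.factorial m : ℝ) := fun m => by
    exact_mod_cast Nat.cast_pos.mpr (Nat.factorial_pos m)
  set C := γ * (Nat.factorial (k - 1) : ℝ) * (∏ i ∈ Finset.range (k - 1), (1 - γ + i)) /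
      (Nat.factorial (k + n - 1) : ℝ) with hC
  have h := (gnedinGaussAux k ((k : ℝ) - γ) ((k : ℝ) + n) hb hc).mul_left C
  convert h using 1
  · rfl
  · funext t
    have hA : (∏ j ∈ Finset.Icc 1 (k - 1), ((k + t : ℝ) - j)) =
        (Nat.factorial (k + t - 1) : ℝ) / (Nat.factorial t : ℝ) := by
      have e1 : Finset.Icc 1 (k - 1) = Finset.Ico 1 k := by
        rw [← Finset.Ico_add_one_right_eq_Icc]
        congr 1
        omega
      rw [e1, Finset.prod_Ico_eq_prod_range]
      have e3 : ∏ i ∈ Finset.range (k - 1), ((k : ℝ) + (t : ℝ) - ((1 + i : ℕ) : ℝ)) =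
          ∏ i ∈ Finset.range (k - 1), ((t : ℝ) + 1 + i) := by
        rw [← Finset.prod_range_reflect (fun i => (t : ℝ) + 1 + i) (k - 1)]
        apply Finset.prod_congr rfl
        intro i hi
        have hik : i < k - 1 := Finset.mem_range.mp hi
        rw [show k - 1 - 1 - i = k - (2 + i) from by omega,
          Nat.cast_sub (by omega : 2 + i ≤ k)]
        push_cast
        ring
      rw [e3, eq_div_iff (hfpos t).ne', mul_comm, show k + t - 1 = t + (k - 1) from by omega]
      exact hfac t (k - 1)
    have hB : (∏ r ∈ Finset.range (n - 1), (1 + ((k : ℝ) + (t : ℝ)) + (r : ℝ))) =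
        (Nat.factorial (k + t + n - 1) : ℝ) / (Nat.factorial (k + t) : ℝ) := by
      have e : ∏ r ∈ Finset.range (n - 1), (1 + ((k : ℝ) + (t : ℝ)) + (r : ℝ)) =
          ∏ r ∈ Finset.range (n - 1), (((k + t : ℕ) : ℝ) + 1 + r) :=
        Finset.prod_congr rfl fun r _ => by push_cast; ring
      rw [e, eq_div_iff (hfpos (k + t)).ne', mul_comm,
        show k + t + n - 1 = (k + t) + (n - 1) from by omega]
      exact hfac (k + t) (n - 1)
    have hPk : (∏ i ∈ Finset.range t, ((k : ℝ) + i)) =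
        (Nat.factorial (k + t - 1) : ℝ) / (Nat.factorial (k - 1) : ℝ) := by
      have e : ∏ i ∈ Finset.range t, ((k : ℝ) + i) =
          ∏ i ∈ Finset.range t, (((k - 1 : ℕ) : ℝ) + 1 + i) :=
        Finset.prod_congr rfl fun i _ => by
          rw [Nat.cast_sub hk]
          push_cast
          ring
      rw [e, eq_div_iff (hfpos (k - 1)).ne', mul_comm,
        show k + t - 1 = (k - 1) + t from by omega]
      exact hfac (k - 1) t
    have hPc : (∏ i ∈ Finset.range t, ((k : ℝ) + (n : ℝ) + i)) =
        (Nat.factorial (k + t + n - 1) : ℝ) / (Nat.factorial (k + n - 1) : ℝ) := by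
      have e : ∏ i ∈ Finset.range t, ((k : ℝ) + (n : ℝ) + i) =
          ∏ i ∈ Finset.range t, (((k + n - 1 : ℕ) : ℝ) + 1 + i) :=
        Finset.prod_congr rfl fun i _ => by
          rw [Nat.cast_sub (by omega : 1 ≤ k + n)]
          push_cast
          ring
      rw [e, eq_div_iff (hfpos (k + n - 1)).ne', mul_comm,
        show k + t + n - 1 = (k + n - 1) + t from by omega]
      exact hfac (k + n - 1) t
    have hPγ : (∏ i ∈ Finset.range (k + t - 1), (1 - γ + (i : ℝ))) =
        (∏ i ∈ Finset.range (k - 1), (1 - γ + (i : ℝ))) *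
          ∏ i ∈ Finset.range t, ((k : ℝ) - γ + i) := by
      rw [show k + t - 1 = (k - 1) + t from by omega, Finset.prod_range_add]
      congr 1
      refine Finset.prod_congr rfl fun i _ => ?_
      rw [Nat.cast_add, Nat.cast_sub hk]
      push_cast
      ring
    rw [hA, hB, hPγ, hC]
    rw [hPk, hPc]
    have h1 := (hfpos t).ne'
    have h2 := (hfpos (k + t)).ne'
    have h3 := (hfpos (k - 1)).ne'
    have h4 := (hfpos (k + n - 1)).ne'
    have h5 := (hfpos (k + t - 1)).ne'
    have h6 := (hfpos (k + t + n - 1)).ne'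
    field_simp
  · -- value equality
    have hnum : (∏ i ∈ Finset.range k, ((k : ℝ) + (n : ℝ) - 1 - i)) =
        (Nat.factorial (k + n - 1) : ℝ) / (Nat.factorial (n - 1) : ℝ) := by
      have e3 : ∏ i ∈ Finset.range k, ((k : ℝ) + (n : ℝ) - 1 - i) =
          ∏ i ∈ Finset.range k, (((n - 1 : ℕ) : ℝ) + 1 + i) := by
        rw [← Finset.prod_range_reflect (fun i => ((n - 1 : ℕ) : ℝ) + 1 + i) k]
        apply Finset.prod_congr rfl
        intro i hi
        have hik : i < k := Finset.mem_range.mp hi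
        rw [show k - 1 - i = k - (1 + i) from by omega,
          Nat.cast_sub (by omega : 1 + i ≤ k), Nat.cast_sub (by omega : 1 ≤ n)]
        push_cast
        ring
      rw [e3, eq_div_iff (hfpos (n - 1)).ne', mul_comm,
        show k + n - 1 = (n - 1) + k from by omega]
      exact hfac (n - 1) k
    have hprodnk : (0 : ℝ) < ∏ i ∈ Finset.range (n - k), (γ + i) :=
      Finset.prod_pos fun i _ => add_pos_of_pos_of_nonneg hγ0 (Nat.cast_nonneg i)
    have hden : (∏ i ∈ Finset.range k, ((k : ℝ) + (n : ℝ) - 1 - i - ((k : ℝ) - γ))) =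
        (∏ i ∈ Finset.range n, (γ + (i : ℝ))) / (∏ i ∈ Finset.range (n - k), (γ + (i : ℝ))) := by
      have e4 : ∏ i ∈ Finset.range k, ((k : ℝ) + (n : ℝ) - 1 - i - ((k : ℝ) - γ)) =
          ∏ i ∈ Finset.range k, (γ + (((n - k) + i : ℕ) : ℝ)) := by
        rw [← Finset.prod_range_reflect (fun i => γ + (((n - k) + i : ℕ) : ℝ)) k]
        apply Finset.prod_congr rfl
        intro i hi
        have hik : i < k := Finset.mem_range.mp hi
        rw [Nat.cast_add, Nat.cast_sub hkn,
          show k - 1 - i = k - (1 + i) from by omega,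
          Nat.cast_sub (by omega : 1 + i ≤ k)]
        push_cast
        ring
      have hsplit := Finset.prod_range_add (fun i => γ + (i : ℝ)) (n - k) k
      rw [show (n - k) + k = n from by omega] at hsplit
      rw [e4, eq_div_iff hprodnk.ne', hsplit]
      ring
    have hγpeel : (∏ i ∈ Finset.range n, (γ + (i : ℝ))) =
        γ * ∏ i ∈ Finset.range (n - 1), (1 + γ + (i : ℝ)) := by
      have hp := Finset.prod_range_succ' (fun i => γ + (i : ℝ)) (n - 1)
      rw [show (n - 1) + 1 = n from by omega] at hp
      rw [hp]
      simp only [Nat.cast_zero, add_zero]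
      rw [mul_comm]
      congr 1
      refine Finset.prod_congr rfl fun i _ => ?_
      push_cast
      ring
    rw [hC, Finset.prod_div_distrib, hnum, hden, hγpeel]
    have hp1 : (0 : ℝ) < ∏ i ∈ Finset.range (n - 1), (1 + γ + (i : ℝ)) :=
      Finset.prod_pos fun i _ => by positivity
    have h3 := (hfpos (k - 1)).ne'
    have h4 := (hfpos (k + n - 1)).ne'
    have h7 := (hfpos (n - 1)).ne'
    field_simp
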